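/- arXiv:1311.5277 — 2 statements merged into one kernel-verified Lean document; each statement's English description precedes it below -/
import Mathlib

section
/- Let δ > 1 be real and y = s + s* − δ^{−1/2} e. Then the spectrum of y, as a subset of ℂ, is exactly the real interval [−2, 2], i.e. spec(y) = {x + 0·i : x ∈ ℝ, −2 ≤ x ≤ 2}. -/
open ContinuousLinearMap

noncomputable section

/-- The Hilbert space `ℓ²(ℕ, ℂ)`. -/
abbrev H : Type := lp (fun _ : ℕ => ℂ) 2

/-- The standard orthonormal basis of `ℓ²(ℕ, ℂ)`. -/
def ξ (n : ℕ) : H := lp.single 2 n 1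

local notation "⟪" x ", " y "⟫" => @inner ℂ _ _ x y

lemma xi_apply (n k : ℕ) : (ξ n) k = if k = n then 1 else 0 := by
  simp [ξ, lp.single_apply, Pi.single_apply]

lemma inner_xi_left (n : ℕ) (v : H) : ⟪ξ n, v⟫ = v n := by
  simp [ξ, lp.inner_single_left]

lemma inner_xi_right (n : ℕ) (v : H) : ⟪v, ξ n⟫ = (starRingEnd ℂ) (v n) := by
  simp [ξ, lp.inner_single_right]

lemma coord_eq (v : H) (n : ℕ) : v n = ⟪ξ n, v⟫ := (inner_xi_left n v).symm

lemma H_ext {v w : H} (h : ∀ n, v n = w n) : v = w := by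
  ext n; exact h n

section ops
variable (s : H →L[ℂ] H) (hs : ∀ n : ℕ, s (ξ n) = ξ (n + 1))

include hs

lemma adj_xi_zero : adjoint s (ξ 0) = 0 := by
  apply H_ext; intro n
  rw [coord_eq, adjoint_inner_right, hs, inner_xi_left]
  simp [xi_apply]

lemma adj_xi_succ (m : ℕ) : adjoint s (ξ (m+1)) = ξ m := by
  apply H_ext; intro n
  rw [coord_eq, adjoint_inner_right, hs, inner_xi_left]
  simp [xi_apply]

lemma adj_apply (v : H) (n : ℕ) : (adjoint s v) n = v (n+1) := by
  rw [coord_eq, adjoint_inner_right, hs, inner_xi_left]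

lemma s_apply_zero (v : H) : (s v) 0 = 0 := by
  rw [coord_eq, ← adjoint_inner_left, adj_xi_zero s hs, inner_zero_left]

lemma s_apply_succ (v : H) (n : ℕ) : (s v) (n+1) = v n := by
  rw [coord_eq, ← adjoint_inner_left, adj_xi_succ s hs, inner_xi_left]

end ops

section ops2
variable (s : H →L[ℂ] H) (hs : ∀ n : ℕ, s (ξ n) = ξ (n + 1))
include hs

lemma adj_s_s (v : H) : adjoint s (s v) = v := by
  apply H_ext; intro n
  rw [adj_apply s hs, s_apply_succ s hs]

lemma s_norm_apply (v : H) : ‖s v‖ = ‖v‖ := by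
  have h : ⟪s v, s v⟫ = ⟪v, v⟫ := by
    rw [← adjoint_inner_right, adj_s_s s hs]
  rw [@norm_eq_sqrt_re_inner ℂ, @norm_eq_sqrt_re_inner ℂ, h]

lemma s_norm_le : ‖s‖ ≤ 1 := by
  refine ContinuousLinearMap.opNorm_le_bound _ zero_le_one fun v => ?_
  rw [s_norm_apply s hs, one_mul]

lemma adj_s_norm_le : ‖adjoint s‖ ≤ 1 := by
  rw [ContinuousLinearMap.adjoint, LinearIsometryEquiv.norm_map]
  exact s_norm_le s hs

end ops2

section eops
variable (e : H →L[ℂ] H) (he : ∀ v : H, e v = (inner ℂ (ξ 0) v : ℂ) • ξ 0)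
include he

lemma e_apply (v : H) (n : ℕ) : (e v) n = if n = 0 then v 0 else 0 := by
  rw [he, lp.coeFn_smul, Pi.smul_apply, inner_xi_left, xi_apply]
  by_cases h : n = 0 <;> simp [h]

lemma e_selfadj : IsSelfAdjoint e := by
  rw [ContinuousLinearMap.isSelfAdjoint_iff_isSymmetric]
  intro u v
  show ⟪e u, v⟫ = ⟪u, e v⟫
  rw [he, he, inner_smul_left, inner_smul_right]
  rw [inner_xi_left, inner_xi_right, ← coord_eq, mul_comm]

end eops

section main
variable (s e : H →L[ℂ] H) (hs : ∀ n : ℕ, s (ξ n) = ξ (n + 1))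
  (he : ∀ v : H, e v = (inner ℂ (ξ 0) v : ℂ) • ξ 0)
include hs he

lemma key_identity (z lam t : ℝ) (hz : z * lam = 1 + z^2) :
    (z:ℂ) • (algebraMap ℂ (H →L[ℂ] H) (lam:ℂ) - (s + adjoint s - (t:ℂ) • e)) =
      (1 - (z:ℂ) • s) * (1 - (z:ℂ) • adjoint s) + ((z*(z+t) : ℝ) : ℂ) • e := by
  have hzC : (z:ℂ) * (lam:ℂ) = 1 + (z:ℂ)^2 := by exact_mod_cast hz
  refine ContinuousLinearMap.ext fun v => H_ext fun n => ?_
  simp only [ContinuousLinearMap.smul_apply, ContinuousLinearMap.sub_apply,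
    ContinuousLinearMap.add_apply, ContinuousLinearMap.mul_apply,
    ContinuousLinearMap.one_apply, Algebra.algebraMap_eq_smul_one,
    ContinuousLinearMap.smul_apply, ContinuousLinearMap.one_apply,
    lp.coeFn_smul, Pi.smul_apply, lp.coeFn_sub, Pi.sub_apply, lp.coeFn_add, Pi.add_apply,
    smul_eq_mul]
  rw [e_apply e he]
  cases n with
  | zero =>
    rw [s_apply_zero s hs, s_apply_zero s hs]
    simp only [if_pos rfl]
    push_cast
    linear_combination (v 0 : ℂ) * hzC
  | succ n =>
    rw [s_apply_succ s hs, s_apply_succ s hs]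
    simp only [lp.coeFn_sub, Pi.sub_apply, lp.coeFn_smul, Pi.smul_apply, smul_eq_mul,
      adj_apply s hs, if_neg (Nat.succ_ne_zero n)]
    push_cast
    linear_combination (v (n+1) : ℂ) * hzC

end main

lemma e_T_e (e : H →L[ℂ] H) (he : ∀ v : H, e v = (inner ℂ (ξ 0) v : ℂ) • ξ 0)
    (T : H →L[ℂ] H) : e * T * e = (⟪ξ 0, T (ξ 0)⟫ : ℂ) • e := by
  refine ContinuousLinearMap.ext fun v => ?_
  simp only [ContinuousLinearMap.mul_apply, ContinuousLinearMap.smul_apply]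
  rw [he v, map_smul, map_smul, he (T (ξ 0)), smul_smul, smul_smul, mul_comm]

def geom (z : ℝ) (hz : |z| < 1) : H :=
  ⟨fun n => (z:ℂ)^n, by
    apply memℓp_gen
    have h2 : (2 : ENNReal).toReal = ((2:ℕ):ℝ) := by norm_num
    rw [h2]
    have : ∀ n : ℕ, ‖((z:ℂ))^n‖ ^ ((2:ℕ):ℝ) = (z^2)^n := by
      intro n
      rw [Real.rpow_natCast, norm_pow, Complex.norm_real, Real.norm_eq_abs,
        ← pow_mul, mul_comm n 2, pow_mul, sq_abs]
    simp only [this]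
    exact summable_geometric_of_lt_one (by positivity) (by nlinarith [abs_nonneg z, sq_abs z])⟩

lemma geom_apply (z : ℝ) (hz : |z| < 1) (n : ℕ) : (geom z hz) n = (z:ℂ)^n := rfl

section resolvent
variable (s : H →L[ℂ] H) (hs : ∀ n : ℕ, s (ξ n) = ξ (n + 1))
include hs

lemma A_geom (z : ℝ) (hz : |z| < 1) :
    (1 - (z:ℂ) • s) (geom z hz) = ξ 0 := by
  apply H_ext; intro n
  simp only [ContinuousLinearMap.sub_apply, ContinuousLinearMap.one_apply,
    ContinuousLinearMap.smul_apply, lp.coeFn_sub, Pi.sub_apply, lp.coeFn_smul,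
    Pi.smul_apply, smul_eq_mul, geom_apply, xi_apply]
  cases n with
  | zero => rw [s_apply_zero s hs]; simp
  | succ n =>
    rw [s_apply_succ s hs, geom_apply]
    simp [pow_succ]; ring

lemma B_geom (z : ℝ) (hz : |z| < 1) :
    (1 - (z:ℂ) • adjoint s) (geom z hz) = ((1 - z^2 : ℝ) : ℂ) • (geom z hz) := by
  apply H_ext; intro n
  simp only [ContinuousLinearMap.sub_apply, ContinuousLinearMap.one_apply,
    ContinuousLinearMap.smul_apply, lp.coeFn_sub, Pi.sub_apply, lp.coeFn_smul,
    Pi.smul_apply, smul_eq_mul, adj_apply s hs, geom_apply]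
  push_cast
  ring

end resolvent

lemma exists_z (lam : ℝ) (h : 2 < |lam|) :
    ∃ z : ℝ, z ≠ 0 ∧ |z| < 1 ∧ z * lam = 1 + z^2 := by
  have h4 : (0:ℝ) ≤ lam^2 - 4 := by
    have := abs_nonneg lam
    nlinarith [sq_abs lam]
  set d := Real.sqrt (lam^2 - 4) with hdname
  have hd : d^2 = lam^2 - 4 := Real.sq_sqrt h4
  have hd0 : 0 ≤ d := Real.sqrt_nonneg _
  rcases lt_or_ge lam 0 with hneg | hpos
  · -- lam < -2
    have hlam : lam < -2 := by
      rcases abs_cases lam with ⟨h1, _⟩ | ⟨h1, _⟩ <;> linarith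
    refine ⟨(lam + d)/2, ?_, ?_, by linear_combination (-(1:ℝ)/4) * hd⟩
    · have : d < -lam := by nlinarith
      intro hzero
      nlinarith
    · rw [abs_lt]
      constructor
      · nlinarith [sq_nonneg (d - (-lam - 2))]
      · nlinarith
  · have hlam : 2 < lam := by
      rcases abs_cases lam with ⟨h1, _⟩ | ⟨h1, _⟩ <;> linarith
    refine ⟨(lam - d)/2, ?_, ?_, by linear_combination (-(1:ℝ)/4) * hd⟩
    · have : d < lam := by nlinarith
      intro hzero
      nlinarith
    · rw [abs_lt]
      constructor
      · nlinarith
      · nlinarith [sq_nonneg (d - (lam - 2))]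

section upper
variable (s e : H →L[ℂ] H) (hs : ∀ n : ℕ, s (ξ n) = ξ (n + 1))
  (he : ∀ v : H, e v = (inner ℂ (ξ 0) v : ℂ) • ξ 0)
include hs he

set_option maxHeartbeats 2000000 in
lemma isUnit_resolvent (t lam : ℝ) (ht0 : 0 ≤ t) (ht1 : t ≤ 1) (hlam : 2 < |lam|) :
    IsUnit (algebraMap ℂ (H →L[ℂ] H) (lam:ℂ) - (s + adjoint s - (t:ℂ) • e)) := by
  obtain ⟨z, hz0, hz1, hzl⟩ := exists_z lam hlam
  have hz2 : z^2 < 1 := by nlinarith [sq_abs z, abs_nonneg z]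
  -- the two geometric units
  have hAnorm : ‖(z:ℂ) • s‖ < 1 := by
    calc ‖(z:ℂ) • s‖ = |z| * ‖s‖ := by
          rw [norm_smul (z:ℂ) s, Complex.norm_real, Real.norm_eq_abs]
      _ ≤ |z| * 1 := by
          have := s_norm_le s hs
          have h0 : (0:ℝ) ≤ |z| := abs_nonneg z
          nlinarith
      _ < 1 := by rw [mul_one]; exact hz1
  have hBnorm : ‖(z:ℂ) • adjoint s‖ < 1 := by
    calc ‖(z:ℂ) • adjoint s‖ = |z| * ‖adjoint s‖ := by
          rw [norm_smul (z:ℂ) (adjoint s), Complex.norm_real, Real.norm_eq_abs]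
      _ ≤ |z| * 1 := by
          have := adj_s_norm_le s hs
          have h0 : (0:ℝ) ≤ |z| := abs_nonneg z
          nlinarith
      _ < 1 := by rw [mul_one]; exact hz1
  set uA : (H →L[ℂ] H)ˣ := Units.oneSub ((z:ℂ) • s) hAnorm with huA
  set uB : (H →L[ℂ] H)ˣ := Units.oneSub ((z:ℂ) • adjoint s) hBnorm with huB
  have huAval : (uA : H →L[ℂ] H) = 1 - (z:ℂ) • s := rfl
  have huBval : (uB : H →L[ℂ] H) = 1 - (z:ℂ) • adjoint s := rfl
  -- inverse images of the geometric vector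
  have hginv : (↑uA⁻¹ : H →L[ℂ] H) (ξ 0) = geom z hz1 := by
    have h1 : (↑uA⁻¹ : H →L[ℂ] H) ((↑uA : H →L[ℂ] H) (geom z hz1)) = geom z hz1 := by
      rw [← ContinuousLinearMap.mul_apply, uA.inv_mul, ContinuousLinearMap.one_apply]
    rw [huAval, A_geom s hs] at h1
    exact h1
  have hc0 : ((1 - z^2 : ℝ) : ℂ) ≠ 0 := by
    rw [Complex.ofReal_ne_zero]; intro h0; nlinarith
  have hgB : (↑uB⁻¹ : H →L[ℂ] H) (geom z hz1) = ((1 - z^2 : ℝ) : ℂ)⁻¹ • geom z hz1 := by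
    have h1 : (↑uB⁻¹ : H →L[ℂ] H) ((↑uB : H →L[ℂ] H) (geom z hz1)) = geom z hz1 := by
      rw [← ContinuousLinearMap.mul_apply, uB.inv_mul, ContinuousLinearMap.one_apply]
    rw [huBval, B_geom s hs, map_smul] at h1
    have hc0' : ((1:ℂ) - (z:ℂ)^2) ≠ 0 := by
      intro h0; apply hc0; push_cast; linear_combination h0
    have h2 := congrArg (fun w : H => ((1 - z^2 : ℝ) : ℂ)⁻¹ • w) h1
    simpa [smul_smul, Complex.ofReal_sub, Complex.ofReal_pow, Complex.ofReal_one,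
      inv_mul_cancel₀ hc0'] using h2
  -- the scalar
  have hscalar : (⟪ξ 0, ((↑uB⁻¹ * ↑uA⁻¹ : H →L[ℂ] H)) (ξ 0)⟫ : ℂ)
      = ((1 - z^2 : ℝ) : ℂ)⁻¹ := by
    rw [ContinuousLinearMap.mul_apply, hginv, hgB, inner_smul_right, inner_xi_left,
      geom_apply, pow_zero, mul_one]
  -- the rank-one correction
  set cC : ℂ := ((z*(z+t) : ℝ) : ℂ) with hcC
  set w : ℂ := ((1 - z^2 : ℝ) : ℂ)⁻¹ with hw
  set X : H →L[ℂ] H := ↑uA⁻¹ * e * ↑uB⁻¹ with hX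
  set K : H →L[ℂ] H := cC • X with hK
  have hXX : X * X = w • X := by
    have h3 := e_T_e e he ((↑uB⁻¹ : H →L[ℂ] H) * ↑uA⁻¹)
    rw [hscalar] at h3
    calc X * X = ↑uA⁻¹ * (e * (↑uB⁻¹ * ↑uA⁻¹) * e) * ↑uB⁻¹ := by
          rw [hX]; simp only [mul_assoc]
      _ = ↑uA⁻¹ * (w • e) * ↑uB⁻¹ := by rw [h3]
      _ = w • X := by
          rw [hX]; simp only [smul_mul_assoc, mul_smul_comm]
  have hKK : K * K = (cC * w) • K := by
    rw [hK, smul_mul_assoc, mul_smul_comm, smul_smul, hXX, smul_smul, smul_smul]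
    congr 1
    ring
  -- positivity of the scalar 1 + τ
  have hden : (0:ℝ) < 1 - z^2 := by linarith
  have hnum : (0:ℝ) < 1 + t*z := by
    nlinarith [abs_nonneg z, neg_abs_le z, le_abs_self z]
  have htau : (1:ℝ) + z*(z+t) * (1-z^2)⁻¹ ≠ 0 := by
    have h6 : (1:ℝ) + z*(z+t) * (1-z^2)⁻¹ = (1+t*z)/(1-z^2) := by
      field_simp
      ring
    rw [h6]
    positivity
  have htauC : (1:ℂ) + cC * w ≠ 0 := by
    have h7 : (1:ℂ) + cC * w = (((1:ℝ) + z*(z+t) * (1-z^2)⁻¹ : ℝ) : ℂ) := by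
      rw [hcC, hw]
      push_cast
      ring
    rw [h7, Complex.ofReal_ne_zero]
    exact htau
  -- 1 + K is a unit
  set u : ℂ := ((1:ℂ) + cC * w)⁻¹ with hu
  have huval : u * ((1:ℂ) + cC * w) = 1 := inv_mul_cancel₀ htauC
  set N : H →L[ℂ] H := 1 - u • K with hN
  clear_value cC w X K u N
  have h8 : K - (u • K + (u * (cC * w)) • K) = 0 := by
    rw [← add_smul]
    have h9 : (u + u * (cC * w)) = 1 := by
      rw [← mul_one_add u, huval]
    rw [h9, one_smul, sub_self]
  have hMN : (1 + K) * N = 1 := by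
    calc (1 + K) * N = (1 + K) - (1 + K) * (u • K) := by rw [hN, mul_sub, mul_one]
      _ = 1 + K - u • (K + K * K) := by rw [mul_smul_comm, add_mul, one_mul]
      _ = 1 + K - (u • K + (u * (cC * w)) • K) := by
          rw [hKK, smul_add, smul_smul]
      _ = 1 + (K - (u • K + (u * (cC * w)) • K)) := by abel
      _ = 1 := by rw [h8, add_zero]
  have hNM : N * (1 + K) = 1 := by
    have hcomm : K * N = N * K := by
      rw [hN, mul_sub, sub_mul, mul_one, one_mul, mul_smul_comm, smul_mul_assoc]
    calc N * (1+K) = N + N*K := by rw [mul_add, mul_one]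
      _ = N + K*N := by rw [hcomm]
      _ = (1+K)*N := by rw [add_mul, one_mul]
      _ = 1 := hMN
  set uM : (H →L[ℂ] H)ˣ := ⟨1+K, N, hMN, hNM⟩ with huM
  have h5 : (↑uA : H →L[ℂ] H) * (1 + K) * ↑uB
      = (1 - (z:ℂ)•s) * (1 - (z:ℂ)•adjoint s) + cC • e := by
    have hmid : (↑uA : H →L[ℂ] H) * K * ↑uB = cC • e := by
      rw [hK, hX, mul_smul_comm, smul_mul_assoc]
      congr 1
      calc (↑uA : H →L[ℂ] H) * (↑uA⁻¹ * e * ↑uB⁻¹) * ↑uB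
          = (↑uA * ↑uA⁻¹) * e * (↑uB⁻¹ * ↑uB) := by simp only [mul_assoc]
        _ = e := by rw [uA.mul_inv, uB.inv_mul, one_mul, mul_one]
    rw [mul_add, mul_one, add_mul, hmid, huAval, huBval]
  have hkey := key_identity s e hs he z lam t hzl
  have hzC : ((z:ℂ)) ≠ 0 := by rwa [ne_eq, Complex.ofReal_eq_zero]
  have h6 : algebraMap ℂ (H →L[ℂ] H) (lam:ℂ) - (s + adjoint s - (t:ℂ) • e)
      = (z:ℂ)⁻¹ • ((↑uA : H →L[ℂ] H) * (1 + K) * ↑uB) := by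
    rw [h5, hcC, ← hkey, smul_smul, inv_mul_cancel₀ hzC, one_smul]
  rw [h6]
  have hU : IsUnit ((↑uA : H →L[ℂ] H) * (1 + K) * ↑uB) := by
    have := (uA * uM * uB).isUnit
    simpa only [Units.val_mul] using this
  have h7 : (z:ℂ)⁻¹ • ((↑uA : H →L[ℂ] H) * (1 + K) * ↑uB)
      = (algebraMap ℂ (H →L[ℂ] H) ((z:ℂ)⁻¹)) * ((↑uA : H →L[ℂ] H) * (1 + K) * ↑uB) := by
    rw [Algebra.algebraMap_eq_smul_one, smul_mul_assoc, one_mul]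
  rw [h7]
  exact ((isUnit_iff_ne_zero.mpr (inv_ne_zero hzC)).map
    (algebraMap ℂ (H →L[ℂ] H))).mul hU

end upper

lemma memlp_finite (f : ℕ → ℂ) (S : Finset ℕ) (hf : ∀ k ∉ S, f k = 0) :
    Memℓp f 2 := by
  apply memℓp_gen
  apply summable_of_ne_finset_zero (s := S)
  intro k hk
  rw [hf k hk]
  simp only [norm_zero]
  rw [Real.zero_rpow]
  norm_num

lemma H_norm_sq (f : H) : ‖f‖^2 = ∑' k, ‖f k‖^2 := by
  have h := lp.norm_rpow_eq_tsum (p := 2) (by norm_num) f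
  have h2 : (2 : ENNReal).toReal = ((2:ℕ):ℝ) := by norm_num
  rw [h2] at h
  simp only [Real.rpow_natCast] at h
  exact_mod_cast h

def wv (z : ℂ) (n : ℕ) : H :=
  ⟨fun k => if 2 ≤ k ∧ k ≤ n+3 then z^(k-2) else 0,
   memlp_finite _ (Finset.Icc 2 (n+3)) (by
     intro k hk
     rw [if_neg]
     simpa [Finset.mem_Icc] using hk)⟩

lemma wv_apply (z : ℂ) (n k : ℕ) :
    (wv z n) k = if 2 ≤ k ∧ k ≤ n+3 then z^(k-2) else 0 := rfl

lemma wv_norm_sq (z : ℂ) (hz : ‖z‖ = 1) (n : ℕ) : ‖wv z n‖^2 = (n+2 : ℝ) := by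
  rw [H_norm_sq]
  rw [tsum_eq_sum (s := Finset.Icc 2 (n+3)) (by
    intro k hk
    rw [wv_apply, if_neg (by simpa [Finset.mem_Icc] using hk)]
    simp)]
  have : ∀ k ∈ Finset.Icc 2 (n+3), ‖(wv z n) k‖^2 = 1 := by
    intro k hk
    rw [wv_apply, if_pos (by simpa [Finset.mem_Icc] using hk), norm_pow, hz, one_pow, one_pow]
  rw [Finset.sum_congr rfl this, Finset.sum_const, Nat.card_Icc]
  simp

section lower
variable (s e : H →L[ℂ] H) (hs : ∀ n : ℕ, s (ξ n) = ξ (n + 1))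
  (he : ∀ v : H, e v = (inner ℂ (ξ 0) v : ℂ) • ξ 0)
include hs he

set_option maxHeartbeats 3200000 in
lemma weyl_coord (t x : ℝ) (z : ℂ) (hz : (x:ℂ) = z + (starRingEnd ℂ) z)
    (hz1 : z * (starRingEnd ℂ) z = 1) (n : ℕ) (k : ℕ) :
    ((algebraMap ℂ (H →L[ℂ] H) (x:ℂ) - (s + adjoint s - (t:ℂ) • e)) (wv z n)) k
      = if k = 1 then -1 else if k = 2 then (starRingEnd ℂ) z
        else if k = n+3 then z^(n+2) else if k = n+4 then -z^(n+1) else 0 := by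
  have hxz : (x:ℂ) * z = z^2 + 1 := by linear_combination z * hz + hz1
  simp only [ContinuousLinearMap.sub_apply, ContinuousLinearMap.add_apply,
    ContinuousLinearMap.smul_apply, Algebra.algebraMap_eq_smul_one,
    ContinuousLinearMap.one_apply, lp.coeFn_sub, Pi.sub_apply, lp.coeFn_add, Pi.add_apply,
    lp.coeFn_smul, Pi.smul_apply, smul_eq_mul]
  rw [e_apply e he, adj_apply s hs]
  cases k with
  | zero =>
    rw [s_apply_zero s hs]
    norm_num [wv_apply]
  | succ k =>
    rw [s_apply_succ s hs]
    simp only [wv_apply]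
    match k with
    | 0 =>
      split_ifs <;>
        first
          | (exfalso; first | assumption | omega)
          | (norm_num; done)
    | 1 =>
      split_ifs <;>
        first
          | (exfalso; first | assumption | omega)
          | (norm_num; done)
          | (norm_num; linear_combination hz)
          | linear_combination hz
    | (m+2) =>
      have e1 : m + 3 - 2 = m + 1 := by omega
      have e2 : m + 2 - 2 = m := by omega
      have e3 : m + 2 + 2 - 2 = m + 2 := by omega
      rcases Nat.lt_trichotomy m n with hm | hm | hm
      · split_ifs <;>
          first
            | (exfalso; first | assumption | omega)
            | (simp only [e1, e2, e3]; linear_combination z^m * hxz)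
      · subst hm
        split_ifs <;>
          first
            | (exfalso; first | assumption | omega)
            | (simp only [e1, e2, e3]; linear_combination z^m * hxz)
      · rcases eq_or_lt_of_le (by omega : n+1 ≤ m) with hm2 | hm2
        · subst hm2
          split_ifs <;>
            first
              | (exfalso; first | assumption | omega)
              | (simp only [e1, e2, e3]; ring)
              | ring
        · split_ifs <;>
            first
              | (exfalso; first | assumption | omega)
              | ring
end lower

section lower2
variable (s e : H →L[ℂ] H) (hs : ∀ n : ℕ, s (ξ n) = ξ (n + 1))
  (he : ∀ v : H, e v = (inner ℂ (ξ 0) v : ℂ) • ξ 0)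
include hs he

lemma weyl_norm (t x : ℝ) (z : ℂ) (hz : (x:ℂ) = z + (starRingEnd ℂ) z)
    (hz1 : z * (starRingEnd ℂ) z = 1) (hznorm : ‖z‖ = 1) (n : ℕ) :
    ‖(algebraMap ℂ (H →L[ℂ] H) (x:ℂ) - (s + adjoint s - (t:ℂ) • e)) (wv z n)‖^2 = 4 := by
  rw [H_norm_sq]
  rw [tsum_eq_sum (s := ({1, 2, n+3, n+4} : Finset ℕ)) (by
    intro k hk
    simp only [Finset.mem_insert, Finset.mem_singleton, not_or] at hk
    rw [weyl_coord s e hs he t x z hz hz1 n k,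
      if_neg hk.1, if_neg hk.2.1, if_neg hk.2.2.1, if_neg hk.2.2.2]
    simp)]
  have hconj : ‖(starRingEnd ℂ) z‖ = 1 := by
    rw [RCLike.norm_conj, hznorm]
  rw [Finset.sum_insert (by simp; all_goals omega), Finset.sum_insert (by simp; all_goals omega),
    Finset.sum_insert (by simp; all_goals omega), Finset.sum_singleton]
  rw [weyl_coord s e hs he t x z hz hz1 n 1, weyl_coord s e hs he t x z hz hz1 n 2,
    weyl_coord s e hs he t x z hz hz1 n (n+3), weyl_coord s e hs he t x z hz hz1 n (n+4)]
  rw [if_pos rfl, if_neg (by omega), if_pos rfl, if_neg (by omega), if_neg (by omega),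
    if_pos rfl, if_neg (by omega), if_neg (by omega), if_neg (by omega), if_pos rfl]
  rw [norm_neg, norm_one, hconj, norm_pow, norm_neg, norm_pow, hznorm]
  norm_num

lemma lower_mem (t x : ℝ) (hx : -2 ≤ x) (hx2 : x ≤ 2) :
    (x:ℂ) ∈ spectrum ℂ (s + adjoint s - (t:ℂ) • e) := by
  rw [spectrum.mem_iff]
  intro hunit
  set z : ℂ := Complex.exp ((Real.arccos (x/2) : ℝ) * Complex.I) with hzdef
  have hznorm : ‖z‖ = 1 := by
    rw [hzdef, Complex.norm_exp_ofReal_mul_I]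
  have hz1 : z * (starRingEnd ℂ) z = 1 := by
    rw [Complex.mul_conj, Complex.normSq_eq_norm_sq, hznorm]
    norm_num
  have hzre : z.re = x / 2 := by
    rw [hzdef, Complex.exp_ofReal_mul_I_re]
    exact Real.cos_arccos (by linarith) (by linarith)
  have hz : (x:ℂ) = z + (starRingEnd ℂ) z := by
    rw [Complex.add_conj, hzre]
    push_cast
    ring
  rcases hunit with ⟨U, hU⟩
  set T := algebraMap ℂ (H →L[ℂ] H) (x:ℂ) - (s + adjoint s - (t:ℂ) • e) with hT
  have hinv : ∀ v : H, v = (↑U⁻¹ : H →L[ℂ] H) (T v) := by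
    intro v
    rw [← hU, ← ContinuousLinearMap.mul_apply, U.inv_mul, ContinuousLinearMap.one_apply]
  have hbound : ∀ n : ℕ, ((n:ℝ) + 2) ≤ ‖(↑U⁻¹ : H →L[ℂ] H)‖^2 * 4 := by
    intro n
    have h1 : ‖wv z n‖^2 = (n+2 : ℝ) := wv_norm_sq z hznorm n
    have h2 : ‖T (wv z n)‖^2 = 4 := by
      rw [hT]; exact weyl_norm s e hs he t x z hz hz1 hznorm n
    have h3 : ‖wv z n‖ ≤ ‖(↑U⁻¹ : H →L[ℂ] H)‖ * ‖T (wv z n)‖ := by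
      conv_lhs => rw [hinv (wv z n)]
      exact ContinuousLinearMap.le_opNorm _ _
    have h4 : ‖wv z n‖^2 ≤ (‖(↑U⁻¹ : H →L[ℂ] H)‖ * ‖T (wv z n)‖)^2 := by
      apply sq_le_sq' <;> nlinarith [norm_nonneg (wv z n), norm_nonneg ((↑U⁻¹ : H →L[ℂ] H))]
    rw [h1, mul_pow, h2] at h4
    linarith
  have := hbound (Nat.ceil (‖(↑U⁻¹ : H →L[ℂ] H)‖^2 * 4))
  have hceil := Nat.le_ceil (‖(↑U⁻¹ : H →L[ℂ] H)‖^2 * 4)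
  linarith

end lower2


/-- If `δ > 1`, `s` is the unilateral shift on `ℓ²(ℕ,ℂ)` and `e` is the orthogonal
projection onto the span of `ξ 0`, then the spectrum of `y = s + s* − δ^{-1/2} e`,
as a subset of `ℂ`, is exactly the real interval `[-2, 2]`. -/
theorem stmt3 (δ : ℝ) (hδ : 1 < δ) (s e : H →L[ℂ] H)
    (hs : ∀ n : ℕ, s (ξ n) = ξ (n + 1))
    (he : ∀ v : H, e v = (inner ℂ (ξ 0) v : ℂ) • ξ 0) :
    spectrum ℂ (s + adjoint s - (((Real.sqrt δ)⁻¹ : ℝ) : ℂ) • e)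
      = Complex.ofReal '' Set.Icc (-2 : ℝ) 2 := by
  set t : ℝ := (Real.sqrt δ)⁻¹ with htdef
  have hsq1 : 1 ≤ Real.sqrt δ := by
    rw [show (1:ℝ) = Real.sqrt 1 from (Real.sqrt_one).symm]
    exact Real.sqrt_le_sqrt (by linarith)
  have ht0 : (0:ℝ) ≤ t := by rw [htdef]; positivity
  have ht1 : t ≤ 1 := by
    rw [htdef]
    exact inv_le_one_of_one_le₀ hsq1
  have hsa : IsSelfAdjoint (s + adjoint s - (t:ℂ) • e) := by
    have he' := e_selfadj e he
    show star _ = _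
    rw [star_sub, star_add, star_smul, ContinuousLinearMap.star_eq_adjoint,
      ContinuousLinearMap.star_eq_adjoint, adjoint_adjoint, he'.star_eq,
      Complex.star_def, Complex.conj_ofReal, add_comm]
  ext μ
  constructor
  · intro hμ
    have hre := hsa.mem_spectrum_eq_re hμ
    have habs : |μ.re| ≤ 2 := by
      by_contra hcon
      push_neg at hcon
      have hu := isUnit_resolvent s e hs he t μ.re ht0 ht1 hcon
      rw [hre] at hμ
      exact (spectrum.mem_iff.mp hμ) hu
    exact ⟨μ.re, abs_le.mp habs, hre.symm⟩
  · rintro ⟨x, hx, rfl⟩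
    exact lower_mem s e hs he t x hx.1 hx.2
end
end

section
/- Let δ > 1 be real and y = s + s* − δ^{−1/2} e. Then y is unitarily equivalent to s + s*: there exists a unitary operator U on H such that U ∘ y ∘ U⁻¹ = s + s*. -/
set_option maxHeartbeats 2000000
set_option synthInstance.maxHeartbeats 1000000

open ContinuousLinearMap

noncomputable section

lemma inner_xi (m : ℕ) (u : H) : (inner ℂ (ξ m) u : ℂ) = u m := by
  simp [ξ, lp.inner_single_left]

lemma xi_inner (m n : ℕ) : (inner ℂ (ξ m) (ξ n) : ℂ) = if m = n then 1 else 0 := by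
  rw [inner_xi]
  by_cases h : m = n
  · subst h; simp [ξ, lp.single_apply_self]
  · simp [h, ξ, lp.single_apply_ne _ _ _ h]

lemma vec_ext {u v : H} (h : ∀ m, (inner ℂ (ξ m) u : ℂ) = inner ℂ (ξ m) v) : u = v := by
  apply lp.ext; funext m
  have := h m; rwa [inner_xi, inner_xi] at this

lemma op_ext {A B : H →L[ℂ] H} (h : ∀ n, A (ξ n) = B (ξ n)) : A = B := by
  refine ContinuousLinearMap.ext fun f => ?_
  have hf : HasSum (fun n : ℕ => lp.single 2 n (f n)) f := lp.hasSum_single ENNReal.ofNat_ne_top f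
  have hA := hf.mapL A
  have hB := hf.mapL B
  have hfun : (fun n => A (lp.single 2 n (f n))) = fun n => B (lp.single 2 n (f n)) := by
    funext n
    have hsingle : lp.single 2 n (f n) = (f n) • ξ n := by
      rw [ξ, ← lp.single_smul]; norm_num
    rw [hsingle, map_smul, map_smul, h]
  rw [hfun] at hA
  exact hA.unique hB

lemma polar_aux {R : Type*} [Ring R] [StarRing R] (T Q Pi : R)
    (f1 : Q * Q = star T * T)
    (f2 : (star T * T) * Pi = 1)
    (f3 : Pi * (star T * T) = 1)
    (f4 : T * (Pi * star T) = 1)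
    (f5 : star Q = Q)
    (f6 : star Pi = Pi) :
    star (T * (Pi * Q)) * (T * (Pi * Q)) = 1 ∧
    (T * (Pi * Q)) * star (T * (Pi * Q)) = 1 ∧
    star (T * (Pi * Q)) * (T * star T) * (T * (Pi * Q)) = star T * T := by
  have g0 : Q * (star T * T) = (star T * T) * Q := by rw [← f1]; noncomm_ring
  have g1 : Q * Pi = Pi * Q := by
    calc Q * Pi = (Pi * (star T * T)) * (Q * Pi) := by rw [f3, one_mul]
      _ = Pi * (((star T * T) * Q) * Pi) := by noncomm_ring
      _ = Pi * ((Q * (star T * T)) * Pi) := by rw [← g0]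
      _ = Pi * (Q * ((star T * T) * Pi)) := by noncomm_ring
      _ = Pi * Q := by rw [f2, mul_one]
  have hstar : star (T * (Pi * Q)) = (Pi * Q) * star T := by
    rw [star_mul, star_mul, f5, f6, g1]
  have hQiQ : (Pi * Q) * Q = 1 := by
    calc (Pi * Q) * Q = Pi * (Q * Q) := by noncomm_ring
      _ = 1 := by rw [f1, f3]
  have hQQi : Q * (Pi * Q) = 1 := by
    calc Q * (Pi * Q) = (Q * Pi) * Q := by noncomm_ring
      _ = (Pi * Q) * Q := by rw [g1]
      _ = 1 := hQiQ
  have hQiQi : (Pi * Q) * (Pi * Q) = Pi := by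
    calc (Pi * Q) * (Pi * Q) = Pi * ((Q * Pi) * Q) := by noncomm_ring
      _ = Pi * ((Pi * Q) * Q) := by rw [g1]
      _ = Pi * 1 := by rw [hQiQ]
      _ = Pi := mul_one Pi
  refine ⟨?_, ?_, ?_⟩
  · calc star (T * (Pi * Q)) * (T * (Pi * Q))
        = ((Pi * Q) * star T) * (T * (Pi * Q)) := by rw [hstar]
      _ = (Pi * Q) * ((star T * T) * (Pi * Q)) := by noncomm_ring
      _ = (Pi * Q) * ((Q * Q) * (Pi * Q)) := by rw [← f1]
      _ = ((Pi * Q) * Q) * (Q * (Pi * Q)) := by noncomm_ring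
      _ = 1 := by rw [hQiQ, hQQi, one_mul]
  · calc (T * (Pi * Q)) * star (T * (Pi * Q))
        = (T * (Pi * Q)) * ((Pi * Q) * star T) := by rw [hstar]
      _ = T * (((Pi * Q) * (Pi * Q)) * star T) := by noncomm_ring
      _ = T * (Pi * star T) := by rw [hQiQi]
      _ = 1 := f4
  · calc star (T * (Pi * Q)) * (T * star T) * (T * (Pi * Q))
        = ((Pi * Q) * star T) * (T * star T) * (T * (Pi * Q)) := by rw [hstar]
      _ = (Pi * Q) * ((star T * T) * ((star T * T) * (Pi * Q))) := by noncomm_ring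
      _ = (Pi * Q) * ((Q * Q) * ((Q * Q) * (Pi * Q))) := by rw [← f1]
      _ = (((Pi * Q) * Q) * Q) * (Q * (Q * (Pi * Q))) := by noncomm_ring
      _ = (1 * Q) * (Q * (Q * (Pi * Q))) := by rw [hQiQ]
      _ = Q * (Q * (Q * (Pi * Q))) := by rw [one_mul]
      _ = Q * (Q * ((Q * (Pi * Q)))) := by noncomm_ring
      _ = Q * (Q * 1) := by rw [hQQi]
      _ = Q * Q := by rw [mul_one]
      _ = star T * T := f1

/-- If `δ > 1`, `s` is the unilateral shift on `ℓ²(ℕ,ℂ)` and `e` is the orthogonal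
projection onto the span of `ξ 0`, then `y = s + s* − δ^{-1/2} e` is unitarily
equivalent to `s + s*`: there is a unitary `U` on `H` with `U ∘ y ∘ U⁻¹ = s + s*`. -/
theorem stmt4 (δ : ℝ) (hδ : 1 < δ) (s e : H →L[ℂ] H)
    (hs : ∀ n : ℕ, s (ξ n) = ξ (n + 1))
    (he : ∀ v : H, e v = (inner ℂ (ξ 0) v : ℂ) • ξ 0) :
    ∃ U : H ≃ₗᵢ[ℂ] H, ∀ v : H,
      U ((s + adjoint s - (((Real.sqrt δ)⁻¹ : ℝ) : ℂ) • e) (U.symm v))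
        = (s + adjoint s) v := by
  classical
  set c : ℝ := (Real.sqrt δ)⁻¹ with hcdef
  have hδ1 : 1 < Real.sqrt δ := by
    have := Real.sqrt_lt_sqrt (by norm_num : (0:ℝ) ≤ 1) hδ
    simpa using this
  have hc0 : 0 < c := inv_pos.mpr (lt_trans one_pos hδ1)
  have hc1 : c < 1 := by
    rw [hcdef]
    exact inv_lt_one_of_one_lt₀ hδ1
  have hcne : (c : ℂ) ≠ 0 := by exact_mod_cast hc0.ne'
  -- adjoint on basis vectors
  have hst0 : adjoint s (ξ 0) = 0 := by
    apply vec_ext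
    intro m
    rw [adjoint_inner_right, hs, xi_inner, inner_zero_right]
    simp
  have hstS : ∀ n, adjoint s (ξ (n + 1)) = ξ n := by
    intro n
    apply vec_ext
    intro m
    rw [adjoint_inner_right, hs, xi_inner, xi_inner]
    simp
  -- algebraic relations
  have h1 : adjoint s * s = 1 := by
    apply op_ext
    intro n
    rw [ContinuousLinearMap.mul_apply, hs, hstS, ContinuousLinearMap.one_apply]
  have h2 : s * adjoint s = 1 - e := by
    apply op_ext
    intro n
    cases n with
    | zero =>
        rw [ContinuousLinearMap.mul_apply, hst0, map_zero, ContinuousLinearMap.sub_apply, ContinuousLinearMap.one_apply, he]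
        rw [xi_inner]
        simp
    | succ k =>
        rw [ContinuousLinearMap.mul_apply, hstS, hs, ContinuousLinearMap.sub_apply, ContinuousLinearMap.one_apply, he]
        rw [xi_inner]
        simp
  -- s is an isometry, hence has norm ≤ 1
  have hsiso : ∀ x : H, ‖s x‖ = ‖x‖ := by
    intro x
    have hmx : adjoint s (s x) = x := by
      have := congrArg (fun A : H →L[ℂ] H => A x) h1
      simpa [mul_apply] using this
    have hinner : (inner ℂ (s x) (s x) : ℂ) = inner ℂ x x := by
      calc (inner ℂ (s x) (s x) : ℂ) = inner ℂ x (adjoint s (s x)) :=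
            (adjoint_inner_right s x (s x)).symm
        _ = inner ℂ x x := by rw [hmx]
    have hre := congrArg Complex.re hinner
    rw [norm_eq_sqrt_re_inner (𝕜 := ℂ) (s x), norm_eq_sqrt_re_inner (𝕜 := ℂ) x]
    exact congrArg Real.sqrt hre
  have hsnorm : ‖s‖ ≤ 1 := by
    refine opNorm_le_bound s zero_le_one fun x => ?_
    rw [hsiso, one_mul]
  -- T = 1 + c • s is invertible
  set T : H →L[ℂ] H := 1 + (c : ℂ) • s with hTdef
  have hTu : IsUnit T := by
    have hlt : ‖-((c : ℂ) • s)‖ < 1 := by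
      rw [norm_neg]
      have h1' : ‖(c : ℂ)‖ = c := by
        rw [Complex.norm_real, Real.norm_eq_abs, abs_of_pos hc0]
      calc ‖(c : ℂ) • s‖ ≤ ‖(c : ℂ)‖ * ‖s‖ := opNorm_smul_le _ _
        _ ≤ c * 1 := by
            rw [h1']; exact mul_le_mul_of_nonneg_left hsnorm hc0.le
        _ < 1 := by rw [mul_one]; exact hc1
    have := (Units.oneSub (-((c : ℂ) • s)) hlt).isUnit
    rw [hTdef]
    simpa [Units.val_oneSub, sub_neg_eq_add] using this
  have hTstar : star T = 1 + (c : ℂ) • adjoint s := by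
    rw [hTdef]
    simp [star_smul, star_eq_adjoint, Complex.star_def, Complex.conj_ofReal]
  -- the two quadratic identities
  set J : H →L[ℂ] H := s + adjoint s with hJdef
  set A : H →L[ℂ] H := s + adjoint s - (c : ℂ) • e with hAdef
  have e1 : star T * T = ((1 : ℂ) + (c : ℂ) * (c : ℂ)) • 1 + (c : ℂ) • J := by
    rw [hTstar, hTdef, hJdef]
    simp only [mul_add, add_mul, one_mul, mul_one, smul_mul_assoc, mul_smul_comm, smul_smul]
    rw [h1]
    module
  have e2 : T * star T = ((1 : ℂ) + (c : ℂ) * (c : ℂ)) • 1 + (c : ℂ) • A := by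
    rw [hTstar, hTdef, hAdef]
    simp only [mul_add, add_mul, one_mul, mul_one, smul_mul_assoc, mul_smul_comm, smul_smul]
    rw [h2]
    module
  -- square root of star T * T
  letI : NonUnitalContinuousFunctionalCalculus ℝ (H →L[ℂ] H) IsSelfAdjoint :=
    IsSelfAdjoint.instNonUnitalContinuousFunctionalCalculus
  have hPpos : (0 : H →L[ℂ] H) ≤ star T * T := star_mul_self_nonneg T
  have hQ2 : CFC.sqrt (star T * T) * CFC.sqrt (star T * T) = star T * T :=
    CFC.sqrt_mul_sqrt_self _ hPpos
  have hQsa : star (CFC.sqrt (star T * T)) = CFC.sqrt (star T * T) :=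
    (IsSelfAdjoint.of_nonneg (CFC.sqrt_nonneg _)).star_eq
  -- inverse of star T * T coming from invertibility of T
  have hTsu : IsUnit (star T) := hTu.star
  have hTv : (hTu.unit : H →L[ℂ] H) = T := hTu.unit_spec
  have hSv : (hTsu.unit : H →L[ℂ] H) = star T := hTsu.unit_spec
  have hPuv : ((hTsu.unit * hTu.unit : (H →L[ℂ] H)ˣ) : H →L[ℂ] H) = star T * T := by
    rw [Units.val_mul, hTv, hSv]
  have f2 : (star T * T) * (((hTsu.unit * hTu.unit)⁻¹ : (H →L[ℂ] H)ˣ) : H →L[ℂ] H) = 1 := by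
    rw [← hPuv]; exact_mod_cast (hTsu.unit * hTu.unit).mul_inv
  have f3 : ((((hTsu.unit * hTu.unit)⁻¹ : (H →L[ℂ] H)ˣ) : H →L[ℂ] H)) * (star T * T) = 1 := by
    rw [← hPuv]; exact_mod_cast (hTsu.unit * hTu.unit).inv_mul
  have hPival : ((((hTsu.unit * hTu.unit)⁻¹ : (H →L[ℂ] H)ˣ) : H →L[ℂ] H))
      = ((hTu.unit⁻¹ : (H →L[ℂ] H)ˣ) : H →L[ℂ] H) *
        ((hTsu.unit⁻¹ : (H →L[ℂ] H)ˣ) : H →L[ℂ] H) := by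
    rw [mul_inv_rev, Units.val_mul]
  have f4 : T * ((((hTsu.unit * hTu.unit)⁻¹ : (H →L[ℂ] H)ˣ) : H →L[ℂ] H) * star T) = 1 := by
    rw [hPival]
    calc T * ((((hTu.unit⁻¹ : (H →L[ℂ] H)ˣ) : H →L[ℂ] H) *
            ((hTsu.unit⁻¹ : (H →L[ℂ] H)ˣ) : H →L[ℂ] H)) * star T)
        = (T * ((hTu.unit⁻¹ : (H →L[ℂ] H)ˣ) : H →L[ℂ] H)) *
          (((hTsu.unit⁻¹ : (H →L[ℂ] H)ˣ) : H →L[ℂ] H) * star T) := by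
          noncomm_ring
      _ = 1 := by rw [hTu.mul_val_inv, hTsu.val_inv_mul, one_mul]
  have f6 : star ((((hTsu.unit * hTu.unit)⁻¹ : (H →L[ℂ] H)ˣ) : H →L[ℂ] H))
      = (((hTsu.unit * hTu.unit)⁻¹ : (H →L[ℂ] H)ˣ) : H →L[ℂ] H) := by
    have hPsa : star (star T * T) = star T * T := by rw [star_mul, star_star]
    have h1' : star ((((hTsu.unit * hTu.unit)⁻¹ : (H →L[ℂ] H)ˣ) : H →L[ℂ] H)) * (star T * T)
        = 1 := by
      rw [← hPsa, ← star_mul, f2, star_one]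
    calc star ((((hTsu.unit * hTu.unit)⁻¹ : (H →L[ℂ] H)ˣ) : H →L[ℂ] H))
        = star ((((hTsu.unit * hTu.unit)⁻¹ : (H →L[ℂ] H)ˣ) : H →L[ℂ] H)) *
          ((star T * T) * ((((hTsu.unit * hTu.unit)⁻¹ : (H →L[ℂ] H)ˣ) : H →L[ℂ] H))) :=
          by rw [f2, mul_one]
      _ = (star ((((hTsu.unit * hTu.unit)⁻¹ : (H →L[ℂ] H)ˣ) : H →L[ℂ] H)) * (star T * T)) *
          ((((hTsu.unit * hTu.unit)⁻¹ : (H →L[ℂ] H)ˣ) : H →L[ℂ] H)) := by noncomm_ring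
      _ = ((((hTsu.unit * hTu.unit)⁻¹ : (H →L[ℂ] H)ˣ) : H →L[ℂ] H)) := by rw [h1', one_mul]
  -- apply the abstract polar decomposition lemma
  obtain ⟨hU0l, hU0r, key⟩ := polar_aux T (CFC.sqrt (star T * T))
    ((((hTsu.unit * hTu.unit)⁻¹ : (H →L[ℂ] H)ˣ) : H →L[ℂ] H)) hQ2 f2 f3 f4 hQsa f6
  set U0 : H →L[ℂ] H := T * (((((hTsu.unit * hTu.unit)⁻¹ : (H →L[ℂ] H)ˣ) : H →L[ℂ] H)) *
    CFC.sqrt (star T * T)) with hU0def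
  -- key conjugation identity
  have hexp : star U0 * (T * star T) * U0
      = ((1 : ℂ) + (c : ℂ) * (c : ℂ)) • 1 + (c : ℂ) • (star U0 * A * U0) := by
    rw [e2, mul_add, add_mul, mul_smul_comm, mul_smul_comm, smul_mul_assoc, smul_mul_assoc,
      mul_one, hU0l]
  have hcancel : ((1 : ℂ) + (c : ℂ) * (c : ℂ)) • (1 : H →L[ℂ] H)
      + (c : ℂ) • (star U0 * A * U0)
      = ((1 : ℂ) + (c : ℂ) * (c : ℂ)) • 1 + (c : ℂ) • J := by
    rw [← hexp, key, e1]
  have hX : star U0 * A * U0 = J := by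
    have h7 : (c : ℂ) • (star U0 * A * U0) = (c : ℂ) • J := add_left_cancel hcancel
    exact smul_right_injective _ hcne h7
  -- assemble the unitary
  have hmem : star U0 ∈ unitary (H →L[ℂ] H) := by
    rw [Unitary.mem_iff]
    constructor
    · rw [star_star]; exact hU0r
    · rw [star_star]; exact hU0l
  refine ⟨Unitary.linearIsometryEquiv (𝕜 := ℂ) ⟨star U0, hmem⟩, fun v => ?_⟩
  have happ : ∀ x : H, Unitary.linearIsometryEquiv (𝕜 := ℂ) (⟨star U0, hmem⟩ :
      unitary (H →L[ℂ] H)) x = (star U0) x := fun x => rfl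
  have hsymm : ∀ x : H, (Unitary.linearIsometryEquiv (𝕜 := ℂ) (⟨star U0, hmem⟩ :
      unitary (H →L[ℂ] H))).symm x = (star (star U0)) x := fun x => rfl
  rw [happ, hsymm, star_star]
  calc (star U0) (A (U0 v)) = (star U0 * A * U0) v := by simp only [ContinuousLinearMap.mul_apply]
    _ = J v := by rw [hX]
end
end
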